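/- For 2 ≤ s ≤ t and x_b, x_g ≥ 0 with sqrt(x_b) + sqrt(x_g) ≤ 1, the maximum asymptotic density I_3(K'_{s,t}, (x_b, x_g)) of the colored clique K'_{s,t} over 3-edge-colored complete graphs with blue density x_b and green density x_g equals x_b^{s/2} · x_g^{t/2} · binomial(s+t, s). -/

import Mathlib

set_option maxHeartbeats 1600000

open Finset

-- A 3-edge-coloring of the complete graph on `Fin N`, colors `0 = blue`, `1 = green`,
-- `2 = red`, given as a symmetric function on ordered pairs.
def IsSymmColoring {N : ℕ} (c : Fin N → Fin N → Fin 3) : Prop := ∀ u v, c u v = c v u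

-- The number of pairs `u < v` receiving a given color.
open scoped Classical in
noncomputable def colorCount {N : ℕ} (c : Fin N → Fin N → Fin 3) (col : Fin 3) : ℕ :=
  (Finset.univ.filter fun p : Fin N × Fin N => p.1 < p.2 ∧ c p.1 p.2 = col).card

-- The number of copies of `K'_{s,t}` in a 3-colored complete graph: pairs of disjoint
-- vertex sets `(A, B)` with `|A| = s`, `|B| = t`, all pairs inside `A` blue, all pairs
-- inside `B` green, and all pairs between `A` and `B` red.
open scoped Classical in
noncomputable def kstCopies (s t : ℕ) {N : ℕ} (c : Fin N → Fin N → Fin 3) : ℕ :=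
  (Finset.univ.filter fun p : Finset (Fin N) × Finset (Fin N) =>
    p.1.card = s ∧ p.2.card = t ∧ Disjoint p.1 p.2 ∧
    (∀ u ∈ p.1, ∀ v ∈ p.1, u ≠ v → c u v = 0) ∧
    (∀ u ∈ p.2, ∀ v ∈ p.2, u ≠ v → c u v = 1) ∧
    (∀ u ∈ p.1, ∀ v ∈ p.2, c u v = 2)).card

-- `I₃(K'_{s,t}, (x_b, x_g))`: the supremum of limiting `K'_{s,t}`-densities over all
-- good sequences of 3-colored complete graphs with blue density `x_b`, green density `x_g`.
noncomputable def I3 (s t : ℕ) (xb xg : ℝ) : ℝ :=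
  sSup { y : ℝ | ∃ (V : ℕ → ℕ) (c : (n : ℕ) → Fin (V n) → Fin (V n) → Fin 3),
    (∀ n, IsSymmColoring (c n)) ∧
    Filter.Tendsto V Filter.atTop Filter.atTop ∧
    Filter.Tendsto (fun n => (colorCount (c n) 0 : ℝ) / ((V n).choose 2 : ℝ))
      Filter.atTop (nhds xb) ∧
    Filter.Tendsto (fun n => (colorCount (c n) 1 : ℝ) / ((V n).choose 2 : ℝ))
      Filter.atTop (nhds xg) ∧
    Filter.Tendsto (fun n => (kstCopies s t (c n) : ℝ) / ((V n).choose (s + t) : ℝ))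
      Filter.atTop (nhds y) }

/-! ### Auxiliary material -/

open Filter

section Aux

lemma card_pairs_eq {N : ℕ} (P : Fin N → Fin N → Prop)
    [DecidablePred fun p : Fin N × Fin N => p.1 < p.2 ∧ P p.1 p.2]
    [DecidablePred fun e : Finset (Fin N) => e.card = 2 ∧ ∀ u ∈ e, ∀ v ∈ e, u ≠ v → P u v]
    (hsymm : ∀ u v, P u v ↔ P v u) :
    (Finset.univ.filter fun p : Fin N × Fin N => p.1 < p.2 ∧ P p.1 p.2).card
      = (Finset.univ.filter fun e : Finset (Fin N) =>
          e.card = 2 ∧ ∀ u ∈ e, ∀ v ∈ e, u ≠ v → P u v).card := by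
  apply Finset.card_bij (fun p _ => ({p.1, p.2} : Finset (Fin N)))
  · rintro ⟨a, b⟩ hp
    simp only [mem_filter, mem_univ, true_and] at hp ⊢
    refine ⟨Finset.card_pair hp.1.ne, ?_⟩
    intro u hu v hv huv
    simp only [mem_insert, mem_singleton] at hu hv
    rcases hu with rfl | rfl <;> rcases hv with rfl | rfl
    · exact absurd rfl huv
    · exact hp.2
    · exact (hsymm _ _).2 hp.2
    · exact absurd rfl huv
  · rintro ⟨a, b⟩ ha ⟨a', b'⟩ hb hab
    simp only [mem_filter, mem_univ, true_and] at ha hb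
    have h1 : a ∈ ({a', b'} : Finset (Fin N)) := by rw [← hab]; simp
    have h2 : b ∈ ({a', b'} : Finset (Fin N)) := by rw [← hab]; simp
    have h3 : a' ∈ ({a, b} : Finset (Fin N)) := by rw [hab]; simp
    simp only [mem_insert, mem_singleton] at h1 h2 h3
    have hha := ha.1
    have hhb := hb.1
    have : a = a' ∧ b = b' := by
      rcases h1 with h1 | h1
      · refine ⟨h1, ?_⟩
        rcases h2 with h2 | h2
        · exfalso; rw [← h1] at h2; exact absurd (h2 ▸ hha) (lt_irrefl _)
        · exact h2
      · exfalso
        rcases h3 with h3 | h3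
        · rw [h3, ← h1] at hhb; exact absurd hhb (lt_irrefl _)
        · rw [h1] at hha; rw [h3] at hhb
          exact absurd (hha.trans hhb) (lt_irrefl _)
    exact Prod.ext this.1 this.2
  · intro e he
    simp only [mem_filter, mem_univ, true_and] at he
    obtain ⟨a, b, hne, rfl⟩ := Finset.card_eq_two.1 he.1
    rcases hne.lt_or_gt with hlt | hlt
    · refine ⟨(a, b), ?_, rfl⟩
      rw [mem_filter]
      exact ⟨mem_univ _, hlt, he.2 a (by simp) b (by simp) hne⟩
    · refine ⟨(b, a), ?_, by rw [Finset.pair_comm]⟩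
      rw [mem_filter]
      exact ⟨mem_univ _, hlt, he.2 b (by simp) a (by simp) hne.symm⟩

open scoped Classical in
noncomputable def cliqueFam {N : ℕ} (c : Fin N → Fin N → Fin 3) (r : ℕ) (col : Fin 3) :
    Finset (Finset (Fin N)) :=
  Finset.univ.filter fun A => A.card = r ∧ ∀ u ∈ A, ∀ v ∈ A, u ≠ v → c u v = col

lemma colorCount_eq_cliqueFam {N : ℕ} (c : Fin N → Fin N → Fin 3)
    (hsymm : IsSymmColoring c) (col : Fin 3) :
    colorCount c col = (cliqueFam c 2 col).card := by
  rw [colorCount, cliqueFam]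
  exact card_pairs_eq (fun u v => c u v = col)
    (fun u v => by show c u v = col ↔ c v u = col; rw [hsymm u v])

lemma cliqueFam_sized {N : ℕ} (c : Fin N → Fin N → Fin 3) (r : ℕ) (col : Fin 3) :
    ((cliqueFam c r col : Finset (Finset (Fin N))) : Set (Finset (Fin N))).Sized r := by
  intro A hA
  simp only [cliqueFam, coe_filter, Set.mem_setOf_eq] at hA
  exact hA.2.1

lemma cliqueFam_card_le {N : ℕ} (c : Fin N → Fin N → Fin 3) {r : ℕ} (hr : 2 ≤ r) (col : Fin 3)
    (m : ℕ) (hm : (cliqueFam c 2 col).card ≤ m) :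
    (cliqueFam c r col).card ≤ (max r (Nat.sqrt (2 * m) + 2)).choose r := by
  set k := max r (Nat.sqrt (2 * m) + 2) with hk
  have hrk : r ≤ k := le_max_left _ _
  have hCk2 : m < k.choose 2 := by
    have h1 : 2 * m < (Nat.sqrt (2 * m) + 1) * (Nat.sqrt (2 * m) + 1) :=
      Nat.lt_succ_sqrt _
    have h2 : (Nat.sqrt (2 * m) + 2).choose 2 ≤ k.choose 2 :=
      Nat.choose_le_choose 2 (le_max_right _ _)
    have h3 : (Nat.sqrt (2 * m) + 2).choose 2
        = (Nat.sqrt (2 * m) + 2) * (Nat.sqrt (2 * m) + 1) / 2 := by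
      rw [Nat.choose_two_right]; rfl
    refine lt_of_lt_of_le ?_ h2
    rw [h3]
    set q := Nat.sqrt (2 * m)
    have h4 : (q + 2) * (q + 1) = (q + 1) * (q + 1) + (q + 1) := by ring
    omega
  by_cases hkN : k ≤ N
  · by_contra hcon
    push_neg at hcon
    have hKK := Finset.kruskal_katona_lovasz_form (i := r - 2) (Nat.sub_le r 2) hrk hkN
      (cliqueFam_sized c r col) hcon.le
    have hsub : ∀ inst : DecidableEq (Fin N),
        ((@Finset.shadow _ inst)^[r-2] (cliqueFam c r col)) ⊆ cliqueFam c 2 col := by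
      intro inst e he
      rw [Finset.mem_shadow_iterate_iff_exists_sdiff] at he
      obtain ⟨A, hA, heA, hcard⟩ := he
      simp only [cliqueFam, mem_filter, mem_univ, true_and] at hA ⊢
      have hecard : e.card = 2 := by
        have h5 := Finset.card_sdiff_of_subset heA
        have h6 := Finset.card_le_card heA
        have h8 : A.card = r := hA.1
        omega
      exact ⟨hecard, fun u hu v hv huv => hA.2 u (heA hu) v (heA hv) huv⟩
    have h7 : r - (r - 2) = 2 := by omega
    rw [h7] at hKK
    have h9 := le_trans hKK (le_trans (Finset.card_le_card (hsub _)) hm)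
    omega
  · push_neg at hkN
    calc (cliqueFam c r col).card
        ≤ (Finset.powersetCard r (Finset.univ : Finset (Fin N))).card := by
          apply Finset.card_le_card
          intro A hA
          simp only [cliqueFam, mem_filter, mem_univ, true_and] at hA
          rw [Finset.mem_powersetCard]
          exact ⟨Finset.subset_univ _, hA.1⟩
      _ = N.choose r := by rw [Finset.card_powersetCard, Finset.card_univ, Fintype.card_fin]
      _ ≤ k.choose r := Nat.choose_le_choose r hkN.le

lemma kstCopies_le_mul (s t : ℕ) {N : ℕ} (c : Fin N → Fin N → Fin 3) :
    kstCopies s t c ≤ (cliqueFam c s 0).card * (cliqueFam c t 1).card := by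
  classical
  rw [kstCopies, ← Finset.card_product]
  apply Finset.card_le_card
  intro p hp
  simp only [mem_filter, mem_univ, true_and] at hp
  rw [Finset.mem_product]
  constructor
  · rw [cliqueFam, mem_filter]
    exact ⟨mem_univ _, hp.1, hp.2.2.2.1⟩
  · rw [cliqueFam, mem_filter]
    exact ⟨mem_univ _, hp.2.1, hp.2.2.2.2.1⟩

lemma cast_descFactorial_eq {a r : ℕ} (h : r ≤ a) :
    ((a.descFactorial r : ℕ) : ℝ) = ∏ i ∈ range r, ((a : ℝ) - i) := by
  rw [Nat.descFactorial_eq_prod_range, Nat.cast_prod]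
  apply Finset.prod_congr rfl
  intro i hi
  rw [mem_range] at hi
  rw [Nat.cast_sub (le_of_lt (lt_of_lt_of_le hi h))]

lemma choose_cast_eq {a r : ℕ} (h : r ≤ a) :
    ((a.choose r : ℕ) : ℝ) = (∏ i ∈ range r, ((a : ℝ) - i)) / r.factorial := by
  rw [eq_div_iff (by exact_mod_cast r.factorial_pos.ne' : (r.factorial : ℝ) ≠ 0),
    ← cast_descFactorial_eq h, Nat.descFactorial_eq_factorial_mul_choose]
  push_cast
  ring

lemma tendsto_choose_div_pow (f g : ℕ → ℕ) (α : ℝ) (hα : 0 ≤ α)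
    (hfg : Tendsto (fun n => (f n : ℝ) / (g n : ℝ)) atTop (nhds α))
    (hg : Tendsto g atTop atTop) (r : ℕ) :
    Tendsto (fun n => ((f n).choose r : ℝ) / (g n : ℝ) ^ r) atTop
      (nhds (α ^ r / r.factorial)) := by
  rcases Nat.eq_zero_or_pos r with rfl | hr
  · simpa using tendsto_const_nhds
  rcases eq_or_lt_of_le hα with rfl | hαpos
  · rw [zero_pow hr.ne', zero_div]
    have hub : ∀ᶠ n in atTop, ((f n).choose r : ℝ) / (g n : ℝ) ^ r
        ≤ ((f n : ℝ) / (g n : ℝ)) ^ r / r.factorial := by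
      filter_upwards [hg.eventually_ge_atTop 1] with n hn
      have hgpos : (0:ℝ) < (g n : ℝ) := by exact_mod_cast hn
      rw [div_pow, div_div, div_le_div_iff₀ (by positivity) (by positivity)]
      calc ((f n).choose r : ℝ) * ((g n:ℝ)^r * r.factorial)
          = (((f n).choose r : ℝ) * r.factorial) * (g n:ℝ)^r := by ring
        _ ≤ (f n:ℝ)^r * (g n:ℝ)^r := by
            apply mul_le_mul_of_nonneg_right _ (by positivity)
            have := Nat.choose_le_pow_div (α := ℝ) r (f n)
            rw [le_div_iff₀ (by positivity)] at this
            exact this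
    have hlb : ∀ᶠ n in atTop, (0:ℝ) ≤ ((f n).choose r : ℝ) / (g n : ℝ) ^ r := by
      filter_upwards with n; positivity
    have htop : Tendsto (fun n => ((f n : ℝ) / (g n : ℝ)) ^ r / r.factorial) atTop (nhds 0) := by
      have := (hfg.pow r).div_const (r.factorial : ℝ)
      simpa [zero_pow hr.ne'] using this
    exact tendsto_of_tendsto_of_tendsto_of_le_of_le' tendsto_const_nhds htop hlb hub
  · have hftop : Tendsto f atTop atTop := by
      rw [Filter.tendsto_atTop]
      intro b
      have h1 : ∀ᶠ n in atTop, (α/2) * (g n : ℝ) ≤ (f n : ℝ) := by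
        have h2 : ∀ᶠ n in atTop, α/2 ≤ (f n : ℝ) / (g n : ℝ) :=
          hfg.eventually (eventually_ge_nhds (by linarith))
        filter_upwards [h2, hg.eventually_ge_atTop 1] with n h2 h1
        have hgpos : (0:ℝ) < (g n : ℝ) := by exact_mod_cast h1
        rw [le_div_iff₀ hgpos] at h2
        linarith
      have h3 : ∀ᶠ n in atTop, (b:ℝ) ≤ (α/2) * (g n : ℝ) := by
        have : Tendsto (fun n => (α/2) * (g n:ℝ)) atTop atTop :=
          (tendsto_natCast_atTop_atTop.comp hg).const_mul_atTop (by linarith)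
        exact this.eventually_ge_atTop _
      filter_upwards [h1, h3] with n h1 h3
      exact_mod_cast le_trans h3 h1
    have hev : ∀ᶠ n in atTop, ((f n).choose r : ℝ) / (g n : ℝ) ^ r
        = (∏ i ∈ range r, ((f n : ℝ)/(g n : ℝ) - (i:ℝ)/(g n : ℝ))) / r.factorial := by
      filter_upwards [hftop.eventually_ge_atTop r, hg.eventually_ge_atTop 1] with n h1 h2
      have hgpos : (0:ℝ) < (g n : ℝ) := by exact_mod_cast h2
      calc ((f n).choose r : ℝ) / (g n : ℝ) ^ r
          = (∏ i ∈ range r, ((f n : ℝ) - i)) / r.factorial / (g n : ℝ) ^ r := by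
            rw [choose_cast_eq h1]
        _ = (∏ i ∈ range r, (((f n : ℝ) - i) / (g n : ℝ))) / r.factorial := by
            rw [Finset.prod_div_distrib, Finset.prod_const, Finset.card_range]; ring
        _ = (∏ i ∈ range r, ((f n : ℝ)/(g n : ℝ) - (i:ℝ)/(g n : ℝ))) / r.factorial := by
            congr 1
            apply Finset.prod_congr rfl
            intro i _
            rw [sub_div]
    have hgtop : Tendsto (fun n => ((g n : ℕ) : ℝ)) atTop atTop :=
      tendsto_natCast_atTop_atTop.comp hg
    have hmain : Tendsto
        (fun n => (∏ i ∈ range r, ((f n : ℝ)/(g n : ℝ) - (i:ℝ)/(g n : ℝ))) / r.factorial)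
        atTop (nhds (α ^ r / r.factorial)) := by
      have hprod : Tendsto
          (fun n => ∏ i ∈ range r, ((f n : ℝ)/(g n : ℝ) - (i:ℝ)/(g n : ℝ)))
          atTop (nhds (∏ _i ∈ range r, α)) := by
        apply tendsto_finset_prod
        intro i _
        have hi0 : Tendsto (fun n => (i:ℝ)/(g n : ℝ)) atTop (nhds 0) :=
          tendsto_const_nhds.div_atTop hgtop
        simpa using hfg.sub hi0
      have : (∏ _i ∈ range r, α) = α ^ r := by
        rw [Finset.prod_const, Finset.card_range]
      rw [this] at hprod
      exact hprod.div_const _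
    exact hmain.congr' (EventuallyEq.symm hev)

def consColoring (n b g : ℕ) : Fin n → Fin n → Fin 3 := fun u v =>
  if (u:ℕ) < b ∧ (v:ℕ) < b then 0
  else if (b ≤ (u:ℕ) ∧ (u:ℕ) < b + g) ∧ (b ≤ (v:ℕ) ∧ (v:ℕ) < b + g) then 1 else 2

lemma consColoring_symm (n b g : ℕ) : IsSymmColoring (consColoring n b g) := by
  intro u v
  unfold consColoring
  by_cases h1 : (u:ℕ) < b <;> by_cases h2 : (v:ℕ) < b <;>
    by_cases h3 : b ≤ (u:ℕ) ∧ (u:ℕ) < b + g <;> by_cases h4 : b ≤ (v:ℕ) ∧ (v:ℕ) < b + g <;>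
    simp [h1, h2, h3, h4]

lemma consColoring_eq_zero_iff {n b g : ℕ} (u v : Fin n) :
    consColoring n b g u v = 0 ↔ ((u:ℕ) < b ∧ (v:ℕ) < b) := by
  unfold consColoring
  split_ifs with h1 h2
  · exact iff_of_true rfl h1
  · exact iff_of_false (by decide) h1
  · exact iff_of_false (by decide) h1

lemma consColoring_eq_one_iff {n b g : ℕ} (u v : Fin n) :
    consColoring n b g u v = 1 ↔
      ((b ≤ (u:ℕ) ∧ (u:ℕ) < b + g) ∧ (b ≤ (v:ℕ) ∧ (v:ℕ) < b + g)) := by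
  unfold consColoring
  split_ifs with h1 h2
  · exact iff_of_false (by decide) (fun hc => by omega)
  · exact iff_of_true rfl h2
  · exact iff_of_false (by decide) h2

lemma consColoring_eq_two {n b g : ℕ} (u v : Fin n) (hu : (u:ℕ) < b)
    (hv : b ≤ (v:ℕ) ∧ (v:ℕ) < b + g) : consColoring n b g u v = 2 := by
  unfold consColoring
  rw [if_neg (by omega), if_neg (by omega)]

lemma card_filter_val {n : ℕ} (P : ℕ → Prop) [DecidablePred P]
    [DecidablePred fun u : Fin n => P (u:ℕ)] :
    (Finset.univ.filter fun u : Fin n => P (u:ℕ)).card = ((range n).filter P).card := by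
  rw [← Finset.card_image_of_injective (Finset.univ.filter fun u : Fin n => P (u:ℕ))
    Fin.val_injective]
  congr 1
  ext a
  simp only [Finset.mem_image, Finset.mem_filter, Finset.mem_range, Finset.mem_univ, true_and]
  constructor
  · rintro ⟨u, hu, rfl⟩
    exact ⟨u.isLt, hu⟩
  · rintro ⟨hlt, hP⟩
    exact ⟨⟨a, hlt⟩, hP, rfl⟩

lemma card_Sb {n b : ℕ} [DecidablePred fun u : Fin n => (u:ℕ) < b] (hb : b ≤ n) :
    (Finset.univ.filter fun u : Fin n => (u:ℕ) < b).card = b := by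
  rw [card_filter_val (fun a => a < b)]
  have : (range n).filter (fun a => a < b) = range b := by
    ext a; simp only [mem_filter, mem_range]; omega
  rw [this, card_range]

lemma card_Sg {n b g : ℕ} [DecidablePred fun u : Fin n => b ≤ (u:ℕ) ∧ (u:ℕ) < b + g]
    (hb : b + g ≤ n) :
    (Finset.univ.filter fun u : Fin n => b ≤ (u:ℕ) ∧ (u:ℕ) < b + g).card = g := by
  rw [card_filter_val (fun a => b ≤ a ∧ a < b + g)]
  have : (range n).filter (fun a => b ≤ a ∧ a < b + g) = range (b + g) \ range b := by
    ext a; simp only [Finset.mem_filter, Finset.mem_range, Finset.mem_sdiff]; omega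
  rw [this, card_sdiff_of_subset (by apply range_subset_range.2; omega), card_range, card_range]
  omega

open scoped Classical in
lemma cliqueFam_eq_powersetCard {N : ℕ} (c : Fin N → Fin N → Fin 3) {r : ℕ} (hr : 2 ≤ r)
    (col : Fin 3) (S : Finset (Fin N))
    (hmem : ∀ u v : Fin N, c u v = col ↔ u ∈ S ∧ v ∈ S) :
    cliqueFam c r col = Finset.powersetCard r S := by
  ext A
  simp only [cliqueFam, mem_filter, mem_univ, true_and, Finset.mem_powersetCard]
  constructor
  · rintro ⟨hcard, hprop⟩
    refine ⟨fun u hu => ?_, hcard⟩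
    have h2A : 1 < A.card := by rw [hcard]; omega
    obtain ⟨v, hv, hvu⟩ := Finset.exists_mem_ne h2A u
    exact ((hmem u v).1 (hprop u hu v hv hvu.symm)).1
  · rintro ⟨hsub, hcard⟩
    exact ⟨hcard, fun u hu v hv _ => (hmem u v).2 ⟨hsub hu, hsub hv⟩⟩

lemma kstCopies_cons {n b g s t : ℕ} (hs : 2 ≤ s) (ht : 2 ≤ t) (hbg : b + g ≤ n) :
    kstCopies s t (consColoring n b g) = b.choose s * g.choose t := by
  classical
  set Sb : Finset (Fin n) := Finset.univ.filter (fun u : Fin n => (u:ℕ) < b) with hSb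
  set Sg : Finset (Fin n) := Finset.univ.filter
    (fun u : Fin n => b ≤ (u:ℕ) ∧ (u:ℕ) < b + g) with hSg
  have key : (Finset.univ.filter fun p : Finset (Fin n) × Finset (Fin n) =>
      p.1.card = s ∧ p.2.card = t ∧ Disjoint p.1 p.2 ∧
      (∀ u ∈ p.1, ∀ v ∈ p.1, u ≠ v → consColoring n b g u v = 0) ∧
      (∀ u ∈ p.2, ∀ v ∈ p.2, u ≠ v → consColoring n b g u v = 1) ∧
      (∀ u ∈ p.1, ∀ v ∈ p.2, consColoring n b g u v = 2)).card
      = ((Finset.powersetCard s Sb) ×ˢ (Finset.powersetCard t Sg)).card := by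
    congr 1
    ext ⟨A, B⟩
    simp only [mem_filter, mem_univ, true_and, Finset.mem_product, Finset.mem_powersetCard]
    constructor
    · rintro ⟨hA, hB, hdisj, hblue, hgreen, hred⟩
      refine ⟨⟨fun u hu => ?_, hA⟩, ⟨fun u hu => ?_, hB⟩⟩
      · have h2A : 1 < A.card := by rw [hA]; omega
        obtain ⟨v, hv, hvu⟩ := Finset.exists_mem_ne h2A u
        have := (consColoring_eq_zero_iff u v).1 (hblue u hu v hv hvu.symm)
        rw [hSb, mem_filter]
        exact ⟨mem_univ _, this.1⟩
      · have h2B : 1 < B.card := by rw [hB]; omega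
        obtain ⟨v, hv, hvu⟩ := Finset.exists_mem_ne h2B u
        have := (consColoring_eq_one_iff u v).1 (hgreen u hu v hv hvu.symm)
        rw [hSg, mem_filter]
        exact ⟨mem_univ _, this.1⟩
    · rintro ⟨⟨hAsub, hA⟩, ⟨hBsub, hB⟩⟩
      have hmA : ∀ u ∈ A, (u:ℕ) < b := by
        intro u hu
        have := hAsub hu; rw [hSb, mem_filter] at this; exact this.2
      have hmB : ∀ u ∈ B, b ≤ (u:ℕ) ∧ (u:ℕ) < b + g := by
        intro u hu
        have := hBsub hu; rw [hSg, mem_filter] at this; exact this.2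
      refine ⟨hA, hB, ?_, ?_, ?_, ?_⟩
      · rw [Finset.disjoint_left]
        intro u huA huB
        have := hmA u huA
        have := hmB u huB
        omega
      · intro u hu v hv _
        exact (consColoring_eq_zero_iff u v).2 ⟨hmA u hu, hmA v hv⟩
      · intro u hu v hv _
        exact (consColoring_eq_one_iff u v).2 ⟨hmB u hu, hmB v hv⟩
      · intro u hu v hv
        exact consColoring_eq_two u v (hmA u hu) (hmB v hv)
  rw [kstCopies, key, Finset.card_product, Finset.card_powersetCard, Finset.card_powersetCard,
    card_Sb (by omega), card_Sg hbg]

lemma colorCount_cons_zero {n b g : ℕ} (hbg : b + g ≤ n) :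
    colorCount (consColoring n b g) 0 = b.choose 2 := by
  classical
  rw [colorCount_eq_cliqueFam _ (consColoring_symm n b g),
    cliqueFam_eq_powersetCard _ le_rfl _ (Finset.univ.filter fun u : Fin n => (u:ℕ) < b)
      (fun u v => by
        rw [consColoring_eq_zero_iff, mem_filter, mem_filter]
        simp),
    Finset.card_powersetCard, card_Sb (by omega)]

lemma colorCount_cons_one {n b g : ℕ} (hbg : b + g ≤ n) :
    colorCount (consColoring n b g) 1 = g.choose 2 := by
  classical
  rw [colorCount_eq_cliqueFam _ (consColoring_symm n b g),
    cliqueFam_eq_powersetCard _ le_rfl _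
      (Finset.univ.filter fun u : Fin n => b ≤ (u:ℕ) ∧ (u:ℕ) < b + g)
      (fun u v => by
        rw [consColoring_eq_one_iff, mem_filter, mem_filter]
        simp),
    Finset.card_powersetCard, card_Sg hbg]

lemma tendsto_floor_mul_div (a : ℝ) (ha : 0 ≤ a) :
    Filter.Tendsto (fun n : ℕ => ((⌊a * n⌋₊ : ℕ) : ℝ) / n) atTop (nhds a) := by
  have hlb : ∀ᶠ n : ℕ in atTop, a - 1 / n ≤ ((⌊a * n⌋₊ : ℕ) : ℝ) / n := by
    filter_upwards [eventually_ge_atTop 1] with n hn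
    have hnpos : (0:ℝ) < n := by exact_mod_cast hn
    rw [le_div_iff₀ hnpos]
    have h1 := Nat.sub_one_lt_floor (a * n)
    have h2 : (a - 1 / n) * n = a * n - 1 := by field_simp
    rw [h2]
    exact h1.le
  have hub : ∀ᶠ n : ℕ in atTop, ((⌊a * n⌋₊ : ℕ) : ℝ) / n ≤ a := by
    filter_upwards [eventually_ge_atTop 1] with n hn
    have hnpos : (0:ℝ) < n := by exact_mod_cast hn
    rw [div_le_iff₀ hnpos]
    exact Nat.floor_le (by positivity)
  have hlow : Filter.Tendsto (fun n : ℕ => a - 1 / n) atTop (nhds a) := by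
    have := tendsto_one_div_atTop_nhds_zero_nat (𝕜 := ℝ)
    simpa using tendsto_const_nhds.sub this
  exact tendsto_of_tendsto_of_tendsto_of_le_of_le' hlow tendsto_const_nhds hlb hub

lemma tendsto_self_div_self :
    Filter.Tendsto (fun n : ℕ => (n : ℝ) / (n : ℝ)) atTop (nhds 1) := by
  apply Tendsto.congr' _ (tendsto_const_nhds (x := (1:ℝ)))
  filter_upwards [eventually_ge_atTop 1] with n hn
  have hnpos : ((n:ℕ):ℝ) ≠ 0 := by positivity
  rw [div_self hnpos]

end Aux

/-- For `2 ≤ s ≤ t` and `√x_b + √x_g ≤ 1`,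
`I₃(K'_{s,t}, (x_b, x_g)) = x_b^{s/2} · x_g^{t/2} · C(s+t, s)`. -/
theorem I3_eq_of_sqrt_le (s t : ℕ) (hs : 2 ≤ s) (hst : s ≤ t) (xb xg : ℝ)
    (hxb : 0 ≤ xb) (hxg : 0 ≤ xg) (h : Real.sqrt xb + Real.sqrt xg ≤ 1) :
    I3 s t xb xg = xb ^ ((s : ℝ) / 2) * xg ^ ((t : ℝ) / 2) * ((s + t).choose s : ℝ) := by
  have ht : 2 ≤ t := hs.trans hst
  set sb := Real.sqrt xb with hsb
  set sg := Real.sqrt xg with hsg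
  have hsb0 : 0 ≤ sb := Real.sqrt_nonneg _
  have hsg0 : 0 ≤ sg := Real.sqrt_nonneg _
  have hsb2 : sb ^ 2 = xb := Real.sq_sqrt hxb
  have hsg2 : sg ^ 2 = xg := Real.sq_sqrt hxg
  have hfacpos : ∀ k : ℕ, (0:ℝ) < (k.factorial : ℝ) := fun k => by
    exact_mod_cast k.factorial_pos
  have hnat' : (s+t).choose s * s.factorial * t.factorial = (s+t).factorial := by
    have hnat := Nat.choose_mul_factorial_mul_factorial (Nat.le_add_right s t)
    simpa using hnat
  have hchoose_cast : (((s+t).choose s : ℕ) : ℝ)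
      = ((s+t).factorial : ℝ) / ((s.factorial : ℝ) * (t.factorial : ℝ)) := by
    rw [eq_div_iff (by positivity)]
    rw [← mul_assoc]
    exact_mod_cast congrArg (Nat.cast (R := ℝ)) hnat'
  have hrpow_b : xb ^ ((s : ℝ) / 2) = sb ^ s := by
    rw [hsb, Real.sqrt_eq_rpow, ← Real.rpow_natCast (xb ^ ((1:ℝ)/2)) s, ← Real.rpow_mul hxb]
    congr 1
    ring
  have hrpow_g : xg ^ ((t : ℝ) / 2) = sg ^ t := by
    rw [hsg, Real.sqrt_eq_rpow, ← Real.rpow_natCast (xg ^ ((1:ℝ)/2)) t, ← Real.rpow_mul hxg]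
    congr 1
    ring
  set y0 : ℝ := xb ^ ((s : ℝ) / 2) * xg ^ ((t : ℝ) / 2) * ((s + t).choose s : ℝ) with hy0def
  have hy0 : y0 = sb ^ s / (s.factorial : ℝ) * (sg ^ t / (t.factorial : ℝ))
      * ((s+t).factorial : ℝ) := by
    rw [hy0def, hrpow_b, hrpow_g, hchoose_cast]
    field_simp
  rw [I3]
  apply IsGreatest.csSup_eq
  constructor
  · -- membership: the construction
    set bq : ℕ → ℕ := fun n => ⌊sb * n⌋₊ with hbqdef
    set gq : ℕ → ℕ := fun n => ⌊sg * n⌋₊ with hgqdef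
    have hbgle : ∀ n, bq n + gq n ≤ n := by
      intro n
      have h1 : (bq n : ℝ) ≤ sb * n := Nat.floor_le (by positivity)
      have h2 : (gq n : ℝ) ≤ sg * n := Nat.floor_le (by positivity)
      have h3 : ((bq n + gq n : ℕ) : ℝ) ≤ (n : ℝ) := by
        push_cast
        nlinarith [Nat.cast_nonneg (α := ℝ) n]
      exact_mod_cast h3
    have hbq : Filter.Tendsto (fun n : ℕ => (bq n : ℝ) / (n : ℝ)) atTop (nhds sb) :=
      tendsto_floor_mul_div sb hsb0
    have hgq : Filter.Tendsto (fun n : ℕ => (gq n : ℝ) / (n : ℝ)) atTop (nhds sg) :=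
      tendsto_floor_mul_div sg hsg0
    have hid : Filter.Tendsto (fun n : ℕ => n) atTop atTop := tendsto_id
    refine ⟨fun n => n, fun n => consColoring n (bq n) (gq n),
      fun n => consColoring_symm _ _ _, hid, ?_, ?_, ?_⟩
    · -- blue density
      have h1 := tendsto_choose_div_pow bq (fun n => n) sb hsb0 hbq hid 2
      have h2 := tendsto_choose_div_pow (fun n => n) (fun n => n) 1 one_pos.le
        tendsto_self_div_self hid 2
      have hne : (1:ℝ)^2 / ((2:ℕ).factorial : ℝ) ≠ 0 := by
        norm_num [Nat.factorial]
      have h3 := h1.div h2 hne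
      have hval : sb ^ 2 / ((2:ℕ).factorial : ℝ) / ((1:ℝ)^2 / ((2:ℕ).factorial : ℝ)) = xb := by
        rw [← hsb2, div_div_div_comm, div_self (by positivity : ((2:ℕ).factorial : ℝ) ≠ 0),
          div_one, one_pow, div_one]
      rw [hval] at h3
      apply h3.congr'
      filter_upwards [eventually_ge_atTop 1] with n hn
      have hn2 : ((n:ℕ):ℝ)^2 ≠ 0 := by
        have : (0:ℝ) < ((n:ℕ):ℝ) := by exact_mod_cast hn
        positivity
      simp only [Pi.div_apply]
      rw [div_div_div_comm, div_self hn2, div_one, colorCount_cons_zero (hbgle n)]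
    · -- green density
      have h1 := tendsto_choose_div_pow gq (fun n => n) sg hsg0 hgq hid 2
      have h2 := tendsto_choose_div_pow (fun n => n) (fun n => n) 1 one_pos.le
        tendsto_self_div_self hid 2
      have hne : (1:ℝ)^2 / ((2:ℕ).factorial : ℝ) ≠ 0 := by
        norm_num [Nat.factorial]
      have h3 := h1.div h2 hne
      have hval : sg ^ 2 / ((2:ℕ).factorial : ℝ) / ((1:ℝ)^2 / ((2:ℕ).factorial : ℝ)) = xg := by
        rw [← hsg2, div_div_div_comm, div_self (by positivity : ((2:ℕ).factorial : ℝ) ≠ 0),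
          div_one, one_pow, div_one]
      rw [hval] at h3
      apply h3.congr'
      filter_upwards [eventually_ge_atTop 1] with n hn
      have hn2 : ((n:ℕ):ℝ)^2 ≠ 0 := by
        have : (0:ℝ) < ((n:ℕ):ℝ) := by exact_mod_cast hn
        positivity
      simp only [Pi.div_apply]
      rw [div_div_div_comm, div_self hn2, div_one, colorCount_cons_one (hbgle n)]
    · -- copy density
      have h1 := tendsto_choose_div_pow bq (fun n => n) sb hsb0 hbq hid s
      have h2 := tendsto_choose_div_pow gq (fun n => n) sg hsg0 hgq hid t
      have h3 := tendsto_choose_div_pow (fun n => n) (fun n => n) 1 one_pos.le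
        tendsto_self_div_self hid (s + t)
      have hne : (1:ℝ)^(s+t) / (((s+t).factorial : ℕ) : ℝ) ≠ 0 := by
        rw [one_pow]
        exact (div_pos one_pos (hfacpos _)).ne'
      have h4 := (h1.mul h2).div h3 hne
      have hval : sb ^ s / (s.factorial : ℝ) * (sg ^ t / (t.factorial : ℝ))
          / ((1:ℝ)^(s+t) / (((s+t).factorial : ℕ) : ℝ)) = y0 := by
        rw [one_pow, hy0]
        field_simp
      rw [hval] at h4
      apply h4.congr'
      filter_upwards [eventually_ge_atTop 1] with n hn
      have hnpos : (0:ℝ) < ((n:ℕ):ℝ) := by exact_mod_cast hn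
      have hnst : ((n:ℕ):ℝ)^(s+t) ≠ 0 := by positivity
      simp only [Pi.div_apply, Pi.mul_apply]
      rw [kstCopies_cons hs ht (hbgle n)]
      push_cast
      rw [div_mul_div_comm, ← pow_add, div_div_div_comm, div_self hnst, div_one]
  · -- upper bound
    rintro y ⟨V, c, hcsym, hV, hbtend, hgtend, hytend⟩
    have hVr : Filter.Tendsto (fun n => ((V n : ℕ) : ℝ)) atTop atTop :=
      tendsto_natCast_atTop_atTop.comp hV
    set db : ℕ → ℝ := fun n => (colorCount (c n) 0 : ℝ) / ((V n).choose 2 : ℝ) with hdbdef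
    set dg : ℕ → ℝ := fun n => (colorCount (c n) 1 : ℝ) / ((V n).choose 2 : ℝ) with hdgdef
    have hqb : Filter.Tendsto (fun n => Real.sqrt (db n)) atTop (nhds sb) :=
      (Real.continuous_sqrt.tendsto xb).comp hbtend
    have hqg : Filter.Tendsto (fun n => Real.sqrt (dg n)) atTop (nhds sg) :=
      (Real.continuous_sqrt.tendsto xg).comp hgtend
    have hVV : Filter.Tendsto (fun n => (V n : ℝ) / (V n : ℝ)) atTop (nhds 1) := by
      apply Filter.Tendsto.congr' _ tendsto_const_nhds
      filter_upwards [hV.eventually_ge_atTop 1] with n hn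
      rw [div_self (by exact_mod_cast Nat.one_le_iff_ne_zero.1 hn : ((V n : ℕ) : ℝ) ≠ 0)]
    have hCV := tendsto_choose_div_pow V V 1 one_pos.le hVV hV (s + t)
    have hCVne : (1:ℝ)^(s+t) / (((s+t).factorial : ℕ) : ℝ) ≠ 0 := by
      rw [one_pow]
      exact (div_pos one_pos (hfacpos _)).ne'
    have hCVinv := hCV.inv₀ hCVne
    have hinvval : ((1:ℝ)^(s+t) / (((s+t).factorial : ℕ) : ℝ))⁻¹ = ((s+t).factorial : ℝ) := by
      rw [one_pow, inv_div, div_one]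
    rw [hinvval] at hCVinv
    have hCVinv' : Filter.Tendsto
        (fun n => ((V n : ℝ))^(s+t) * (((V n).choose (s+t) : ℕ) : ℝ)⁻¹) atTop
        (nhds ((s+t).factorial : ℝ)) := by
      apply hCVinv.congr
      intro n
      rw [inv_div, div_eq_mul_inv]
    set Φ : ℕ → ℝ := fun n =>
      (Real.sqrt (db n) + ((s:ℝ)+2)/(V n : ℝ))^s * (Real.sqrt (dg n) + ((t:ℝ)+2)/(V n : ℝ))^t
        * ((V n : ℝ)^(s+t) * (((V n).choose (s+t) : ℕ) : ℝ)⁻¹)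
        / ((s.factorial : ℝ) * (t.factorial : ℝ)) with hΦdef
    have hΦ : Filter.Tendsto Φ atTop (nhds y0) := by
      have hz1 : Filter.Tendsto (fun n => ((s:ℝ)+2)/(V n : ℝ)) atTop (nhds 0) :=
        tendsto_const_nhds.div_atTop hVr
      have hz2 : Filter.Tendsto (fun n => ((t:ℝ)+2)/(V n : ℝ)) atTop (nhds 0) :=
        tendsto_const_nhds.div_atTop hVr
      have hc1 : Filter.Tendsto (fun n => Real.sqrt (db n) + ((s:ℝ)+2)/(V n : ℝ))
          atTop (nhds sb) := by simpa using hqb.add hz1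
      have hc2 : Filter.Tendsto (fun n => Real.sqrt (dg n) + ((t:ℝ)+2)/(V n : ℝ))
          atTop (nhds sg) := by simpa using hqg.add hz2
      have := (((hc1.pow s).mul (hc2.pow t)).mul hCVinv').div_const
        ((s.factorial : ℝ) * (t.factorial : ℝ))
      have hval : sb ^ s * sg ^ t * ((s+t).factorial : ℝ)
          / ((s.factorial : ℝ) * (t.factorial : ℝ)) = y0 := by
        rw [hy0]
        field_simp
      rw [hval] at this
      exact this
    have claim : ∀ᶠ n in atTop,
        (kstCopies s t (c n) : ℝ) / ((V n).choose (s + t) : ℝ) ≤ Φ n := by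
      filter_upwards [hV.eventually_ge_atTop (s + t + 1)] with n hn
      have hN1 : 1 ≤ V n := by omega
      have hNr : (0:ℝ) < ((V n : ℕ) : ℝ) := by exact_mod_cast hN1
      have hC2pos : (0:ℝ) < ((V n).choose 2 : ℝ) :=
        Nat.cast_pos.2 (Nat.choose_pos (by omega))
      have hCkpos : (0:ℝ) < ((V n).choose (s+t) : ℝ) :=
        Nat.cast_pos.2 (Nat.choose_pos (by omega))
      have hdb0 : 0 ≤ db n := div_nonneg (Nat.cast_nonneg _) (Nat.cast_nonneg _)
      have hdg0 : 0 ≤ dg n := div_nonneg (Nat.cast_nonneg _) (Nat.cast_nonneg _)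
      have h2C : (2 * ((V n).choose 2) : ℕ) = V n * (V n - 1) := by
        have hdvd : 2 ∣ V n * (V n - 1) := by
          have he := Nat.even_mul_succ_self (V n - 1)
          have hne : V n - 1 + 1 = V n := by omega
          rw [hne] at he
          rw [mul_comm]
          exact he.two_dvd
        rw [Nat.choose_two_right, Nat.mul_div_cancel' hdvd]
      -- generic clique bound
      have cliquebound : ∀ (col : Fin 3) (r : ℕ), 2 ≤ r →
          ∀ d : ℝ, d = (colorCount (c n) col : ℝ) / ((V n).choose 2 : ℝ) →
          ((cliqueFam (c n) r col).card : ℝ)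
            ≤ (Real.sqrt d * (V n : ℝ) + ((r:ℝ)+2))^r / (r.factorial : ℝ) := by
        intro col r hr2 d hd
        have hd0 : 0 ≤ d := by rw [hd]; positivity
        have hmcast : (colorCount (c n) col : ℝ) = d * ((V n).choose 2 : ℝ) := by
          rw [hd, div_mul_cancel₀ _ hC2pos.ne']
        have hsqrtle : Real.sqrt (2 * colorCount (c n) col) ≤ Real.sqrt d * (V n : ℝ) := by
          have e1 : ((2 * colorCount (c n) col : ℕ) : ℝ) ≤ d * ((V n : ℝ))^2 := by
            push_cast
            rw [hmcast]
            have e2 : ((V n).choose 2 : ℝ) * 2 = ((V n : ℕ) * (V n - 1) : ℕ) := by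
              rw [← h2C]; push_cast; ring
            have e3 : (((V n : ℕ) * (V n - 1) : ℕ) : ℝ) ≤ ((V n : ℝ))^2 := by
              have : (V n : ℕ) * (V n - 1) ≤ V n * V n := by
                apply Nat.mul_le_mul_left
                omega
              calc (((V n : ℕ) * (V n - 1) : ℕ) : ℝ) ≤ ((V n * V n : ℕ) : ℝ) := by
                    exact_mod_cast this
                _ = ((V n : ℝ))^2 := by push_cast; ring
            calc 2 * (d * ((V n).choose 2 : ℝ)) = d * (((V n).choose 2 : ℝ) * 2) := by ring
              _ ≤ d * ((V n : ℝ))^2 := by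
                  rw [e2]
                  exact mul_le_mul_of_nonneg_left e3 hd0
          calc Real.sqrt (2 * colorCount (c n) col)
              = Real.sqrt ((2 * colorCount (c n) col : ℕ) : ℝ) := by push_cast; ring_nf
            _ ≤ Real.sqrt (d * ((V n : ℝ))^2) := Real.sqrt_le_sqrt e1
            _ = Real.sqrt d * (V n : ℝ) := by
                rw [Real.sqrt_mul hd0, Real.sqrt_sq hNr.le]
        have hnsq : ((Nat.sqrt (2 * colorCount (c n) col) : ℕ) : ℝ)
            ≤ Real.sqrt (2 * colorCount (c n) col) := by
          rw [Real.le_sqrt (Nat.cast_nonneg _) (by positivity)]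
          exact_mod_cast Nat.sqrt_le' _
        set kb := max r (Nat.sqrt (2 * colorCount (c n) col) + 2) with hkb
        have h1 : (cliqueFam (c n) r col).card ≤ kb.choose r :=
          cliqueFam_card_le (c n) hr2 col _
            (le_of_eq (colorCount_eq_cliqueFam (c n) (hcsym n) col).symm)
        have hkbub : (kb : ℝ) ≤ Real.sqrt d * (V n : ℝ) + ((r:ℝ)+2) := by
          have hkn : kb ≤ Nat.sqrt (2 * colorCount (c n) col) + 2 + r := by omega
          have : (kb : ℝ) ≤ ((Nat.sqrt (2 * colorCount (c n) col) + 2 + r : ℕ) : ℝ) := by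
            exact_mod_cast hkn
          push_cast at this
          have hd1 : Real.sqrt (2 * colorCount (c n) col) ≤ Real.sqrt d * (V n : ℝ) := hsqrtle
          -- want kb ≤ sqrt d * V + r + 2, but we have kb ≤ nsqrt + 2 + r and nsqrt ≤ sqrt(2m) ≤ ...
          -- note r + 2 vs nsqrt + 2 + r: but this gives kb ≤ sqrt d * V + 2 + r only if
          -- nsqrt ≤ sqrt d * V. That's hnsq.trans hd1... but then bound is sqrtdV + 2 + r ✓
          nlinarith [hnsq]
        calc ((cliqueFam (c n) r col).card : ℝ) ≤ (kb.choose r : ℝ) := by exact_mod_cast h1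
          _ ≤ (kb : ℝ)^r / (r.factorial : ℝ) := Nat.choose_le_pow_div r kb
          _ ≤ (Real.sqrt d * (V n : ℝ) + ((r:ℝ)+2))^r / (r.factorial : ℝ) := by
              gcongr
      have hAs := cliquebound 0 s hs (db n) rfl
      have hBt := cliquebound 1 t ht (dg n) rfl
      have hk : (kstCopies s t (c n) : ℝ)
          ≤ ((cliqueFam (c n) s 0).card : ℝ) * ((cliqueFam (c n) t 1).card : ℝ) := by
        exact_mod_cast kstCopies_le_mul s t (c n)
      have hprod : (kstCopies s t (c n) : ℝ)
          ≤ (Real.sqrt (db n) * (V n : ℝ) + ((s:ℝ)+2))^s / (s.factorial : ℝ)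
            * ((Real.sqrt (dg n) * (V n : ℝ) + ((t:ℝ)+2))^t / (t.factorial : ℝ)) := by
        refine hk.trans (mul_le_mul hAs hBt (Nat.cast_nonneg _) (by positivity))
      have hΦeq : Φ n = (Real.sqrt (db n) * (V n : ℝ) + ((s:ℝ)+2))^s / (s.factorial : ℝ)
            * ((Real.sqrt (dg n) * (V n : ℝ) + ((t:ℝ)+2))^t / (t.factorial : ℝ))
            / (((V n).choose (s+t) : ℕ) : ℝ) := by
        simp only [hΦdef]
        have e1 : Real.sqrt (db n) + ((s:ℝ)+2)/(V n : ℝ)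
            = (Real.sqrt (db n) * (V n : ℝ) + ((s:ℝ)+2)) / (V n : ℝ) := by
          field_simp
        have e2 : Real.sqrt (dg n) + ((t:ℝ)+2)/(V n : ℝ)
            = (Real.sqrt (dg n) * (V n : ℝ) + ((t:ℝ)+2)) / (V n : ℝ) := by
          field_simp
        rw [e1, e2, div_pow, div_pow, pow_add]
        field_simp
      rw [hΦeq]
      gcongr
    exact le_of_tendsto_of_tendsto hytend hΦ claim
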